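/- (Criterion for a 2-move to the left, case (i)) Let π̄ be a permutation of {0,1,…,n} such that there exist positions p and q with p+1 < q < n satisfying: π̄_{q+1} ≡ π̄_p + 1 (mod n+1), and the triple of values x = π̄_p, y = π̄_{p+1}, z = π̄_q is positively oriented, i.e., either x < y < z, or y < z < x, or z < x < y (so π̄ has the pattern [⋯ x y ⋯ z x̄ ⋯]). Then there exists a block transposition σ̄ of {0,1,…,n} such that σ̄∘π̄ has at least two more bonds than π̄. -/

import Mathlib

/-- `π` is the block transposition `σ(i,j,k)` on `{1,…,n}` (positions/values written
1-based; the underlying type is `Fin n`, so position `t : Fin n` stands for `t+1`). -/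
def IsBlockTranspositionOf (n i j k : ℕ) (π : Equiv.Perm (Fin n)) : Prop :=
  i < j ∧ j < k ∧ k ≤ n ∧
  ∀ t : Fin n,
    (π t : ℕ) + 1 =
      if t.val + 1 ≤ i ∨ k < t.val + 1 then t.val + 1
      else if t.val + 1 ≤ k - j + i then t.val + 1 + (j - i)
      else t.val + 1 - (k - j)

/-- `π` is a block transposition of `Sym_n`. -/
def IsBlockTransposition (n : ℕ) (π : Equiv.Perm (Fin n)) : Prop :=
  ∃ i j k : ℕ, IsBlockTranspositionOf n i j k π

/-- the block transposition distance `d(π,ν)`: the least `m` such that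
`ν = π ∘ σ₁ ∘ ⋯ ∘ σ_m` with each `σ_i` a block transposition. -/
noncomputable def btDist (n : ℕ) (π ν : Equiv.Perm (Fin n)) : ℕ :=
  sInf {m | ∃ l : List (Equiv.Perm (Fin n)),
    l.length = m ∧ (∀ σ ∈ l, IsBlockTransposition n σ) ∧ ν = π * l.prod}

/-- `[0 π]` : the permutation of `{0,…,n}` fixing `0` and agreeing with `π` on `{1,…,n}`. -/
def zeroExtend {n : ℕ} (π : Equiv.Perm (Fin n)) : Equiv.Perm (Fin (n + 1)) :=
  Equiv.Perm.decomposeFin.symm (0, π)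

/-- the value of the sequence `0 π₁ ⋯ π_n` (positions taken mod `n+1`, `π₀ := 0`). -/
def seqVal (n : ℕ) (π : Equiv.Perm (Fin n)) (x : ℕ) : ℕ :=
  if h : x % (n + 1) = 0 then 0
  else (π ⟨x % (n + 1) - 1, by
    have h2 : x % (n + 1) < n + 1 := Nat.mod_lt _ (Nat.succ_pos n)
    omega⟩ : Fin n).val + 1

/-- `π` and `π'` are torically equivalent: `π'_x ≡ π_{x+r} − π_r (mod n+1)`. -/
def ToricEquiv (n : ℕ) (π π' : Equiv.Perm (Fin n)) : Prop :=
  ∃ r ≤ n, ∀ x : ℕ, 1 ≤ x → x ≤ n →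
    seqVal n π' x ≡ seqVal n π (x + r) + (n + 1) - seqVal n π r [MOD n + 1]

/-- `ϖ` is the image of `π` under the toric map `Ω_r`. -/
def IsToricImage (n r : ℕ) (π ϖ : Equiv.Perm (Fin n)) : Prop :=
  ∀ x : ℕ, 1 ≤ x → x ≤ n →
    seqVal n ϖ x ≡ seqVal n π (x + r) + (n + 1) - seqVal n π r [MOD n + 1]

/-- the value at place `x` of the sequence `0 π₁ ⋯ π_n (n+1)`. -/
def extSeq (n : ℕ) (π : Equiv.Perm (Fin n)) (x : ℕ) : ℕ :=
  if hx : 1 ≤ x ∧ x ≤ n then (π ⟨x - 1, by omega⟩ : Fin n).val + 1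
  else if x = 0 then 0 else n + 1

/-- the number of bonds of `π`, i.e. of adjacent pairs `x, x+1` in the sequence
`0 π₁ ⋯ π_n (n+1)`. -/
def bondCount (n : ℕ) (π : Equiv.Perm (Fin n)) : ℕ :=
  ((Finset.range (n + 1)).filter fun t => extSeq n π (t + 1) = extSeq n π t + 1).card

/-- `σ` is a block transposition `σ̄(i,j,k)`, `−1 ≤ i < j < k ≤ n`, of `{0,1,…,n}`. -/
def IsBlockTransposition0 (n : ℕ) (σ : Equiv.Perm (Fin (n + 1))) : Prop :=
  ∃ i j k : ℤ, -1 ≤ i ∧ i < j ∧ j < k ∧ k ≤ (n : ℤ) ∧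
    ∀ t : Fin (n + 1),
      ((σ t : ℕ) : ℤ) =
        if ((t : ℕ) : ℤ) ≤ i ∨ k < ((t : ℕ) : ℤ) then ((t : ℕ) : ℤ)
        else if ((t : ℕ) : ℤ) ≤ k - j + i then ((t : ℕ) : ℤ) + (j - i)
        else ((t : ℕ) : ℤ) - (k - j)

/-- the number of bonds of a permutation `π̄` of `{0,…,n}`: indices `t`, `0 ≤ t < n`,
with `π̄_{t+1} ≡ π̄_t + 1 (mod n+1)`. -/
def bondCount0 (n : ℕ) (π : Equiv.Perm (Fin (n + 1))) : ℕ :=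
  (Finset.univ.filter fun t : Fin n =>
    (π t.succ : Fin (n + 1)).val = ((π t.castSucc : Fin (n + 1)).val + 1) % (n + 1)).card

-- ===== auxiliary material =====

def btf (a b c t : ℕ) : ℕ :=
  if t < a ∨ c ≤ t then t else if t < a + (c - b) then t + (b - a) else t - (c - b)

lemma btf_lt (n a b c : ℕ) (hab : a < b) (hbc : b < c) (hc : c ≤ n+1) (t : ℕ) (ht : t < n+1) :
    btf a b c t < n+1 := by unfold btf; split_ifs <;> omega

lemma btf_inv (n a b c : ℕ) (hab : a < b) (hbc : b < c) (hc : c ≤ n+1) (t : ℕ) (ht : t < n+1) :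
    btf a (a + (c-b)) c (btf a b c t) = t := by unfold btf; split_ifs <;> omega

def btPerm (n a b c : ℕ) (hab : a < b) (hbc : b < c) (hc : c ≤ n + 1) :
    Equiv.Perm (Fin (n+1)) where
  toFun t := ⟨btf a b c t.val, btf_lt n a b c hab hbc hc _ t.isLt⟩
  invFun t := ⟨btf a (a + (c-b)) c t.val,
    btf_lt n a (a + (c-b)) c (by omega) (by omega) hc _ t.isLt⟩
  left_inv t := Fin.ext (btf_inv n a b c hab hbc hc _ t.isLt)
  right_inv t := Fin.ext (by
    have h : a + (c - (a + (c - b))) = b := by omega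
    have h2 := btf_inv n a (a + (c-b)) c (by omega) (by omega) hc t.val t.isLt
    rwa [h] at h2)

lemma btPerm_val (n a b c : ℕ) (hab : a < b) (hbc : b < c) (hc : c ≤ n + 1) (t : Fin (n+1)) :
    ((btPerm n a b c hab hbc hc) t).val = btf a b c t.val := rfl

lemma btPerm_isBT (n a b c : ℕ) (hab : a < b) (hbc : b < c) (hc : c ≤ n + 1) :
    IsBlockTransposition0 n (btPerm n a b c hab hbc hc) := by
  refine ⟨(a:ℤ)-1, (b:ℤ)-1, (c:ℤ)-1, by omega, by omega, by omega, by omega, ?_⟩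
  intro t
  rw [btPerm_val]
  unfold btf
  split_ifs <;> push_cast <;> omega

lemma succ_mod (n x : ℕ) (h : x ≤ n) : (x + 1) % (n + 1) = if x = n then 0 else x + 1 := by
  split_ifs with h'
  · subst h'; exact Nat.mod_self _
  · exact Nat.mod_eq_of_lt (by omega)

lemma mod_form (n x y : ℕ) (hx : x ≤ n) (hy : y ≤ n) (h : y = x + 1 ∨ (x = n ∧ y = 0)) :
    y = (x + 1) % (n + 1) := by rw [succ_mod n x hx]; split_ifs <;> omega

lemma succ_mod_inj (n x z : ℕ) (hx : x ≤ n) (hz : z ≤ n)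
    (h : (x + 1) % (n + 1) = (z + 1) % (n + 1)) : x = z := by
  rw [succ_mod n x hx, succ_mod n z hz] at h; split_ifs at h <;> omega

lemma btf_succ (n a b c : ℕ) (hab : a < b) (hbc : b < c) (hc : c ≤ n + 1)
    (s t : ℕ) (hs : s ≤ n) (hst : t = s + 1 ∨ (s = n ∧ t = 0))
    (e1 : ¬(s + 1 = a ∨ (a = 0 ∧ s = n)))
    (e2 : s + 1 ≠ a + (c - b))
    (e3 : ¬(s + 1 = c ∨ (c = n + 1 ∧ s = n))) :
    btf a b c t = btf a b c s + 1 ∨ (btf a b c s = n ∧ btf a b c t = 0) := by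
  unfold btf; split_ifs <;> omega

lemma bond_gain (n : ℕ) (ρ ρ' : Equiv.Perm (Fin (n+1))) (p' q' : Fin n) (hne : p' ≠ q')
    (hpres : ∀ t : Fin n, (ρ t.succ).val = ((ρ t.castSucc).val + 1) % (n+1) →
      (ρ' t.succ).val = ((ρ' t.castSucc).val + 1) % (n+1))
    (hp : (ρ' p'.succ).val = ((ρ' p'.castSucc).val + 1) % (n+1))
    (hq : (ρ' q'.succ).val = ((ρ' q'.castSucc).val + 1) % (n+1))
    (hnp : ¬ (ρ p'.succ).val = ((ρ p'.castSucc).val + 1) % (n+1))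
    (hnq : ¬ (ρ q'.succ).val = ((ρ q'.castSucc).val + 1) % (n+1)) :
    bondCount0 n ρ + 2 ≤ bondCount0 n ρ' := by
  classical
  unfold bondCount0
  set S := Finset.univ.filter fun t : Fin n =>
    (ρ t.succ).val = ((ρ t.castSucc).val + 1) % (n+1) with hS
  set T := Finset.univ.filter fun t : Fin n =>
    (ρ' t.succ).val = ((ρ' t.castSucc).val + 1) % (n+1) with hT
  have hpS : p' ∉ S := by simp [hS, hnp]
  have hqS : q' ∉ S := by simp [hS, hnq]
  have hsub : insert p' (insert q' S) ⊆ T := by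
    intro t ht
    simp only [Finset.mem_insert] at ht
    simp only [hT, Finset.mem_filter, Finset.mem_univ, true_and]
    rcases ht with rfl | rfl | ht
    · exact hp
    · exact hq
    · exact hpres t (by simpa [hS] using ht)
  have hcard : (insert p' (insert q' S)).card = S.card + 2 := by
    rw [Finset.card_insert_of_notMem (by simp [hqS, hpS, hne]),
      Finset.card_insert_of_notMem hqS]
  have := Finset.card_le_card hsub
  omega

lemma finish_aux (n p q : ℕ) (hpq : p + 1 < q) (hq : q < n)
    (π σ : Equiv.Perm (Fin (n + 1))) (X Y Z : ℕ)
    (hX : (π (⟨p, Nat.lt_succ_of_lt (Nat.lt_trans (Nat.lt_trans (Nat.lt_succ_self p) hpq) hq)⟩ : Fin (n+1))).val = X)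
    (hYv : (π (⟨p+1, Nat.lt_succ_of_lt (Nat.lt_trans hpq hq)⟩ : Fin (n+1))).val = Y)
    (hZv : (π (⟨q, Nat.lt_succ_of_lt hq⟩ : Fin (n+1))).val = Z)
    (h1 : (π (⟨q + 1, Nat.succ_lt_succ hq⟩ : Fin (n+1))).val = (X + 1) % (n + 1))
    (hXZ : X ≠ Z)
    (hσ : ∀ u v : Fin (n+1), v.val = (u.val + 1) % (n+1) →
        u.val ≠ X → u.val ≠ Z → ¬(u.val + 1 = Y ∨ (Y = 0 ∧ u.val = n)) →
        (σ v).val = ((σ u).val + 1) % (n+1))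
    (hpσ : ∀ u v : Fin (n+1), u.val = X → v.val = Y →
        (σ v).val = ((σ u).val + 1) % (n+1))
    (hqσ : ∀ u v : Fin (n+1), u.val = Z → v.val = (X + 1) % (n+1) →
        (σ v).val = ((σ u).val + 1) % (n+1)) :
    bondCount0 n π + 2 ≤ bondCount0 n (σ * π) := by
  have hpn : p < n + 1 := by omega
  have hp1n : p + 1 < n + 1 := by omega
  have hqn : q < n + 1 := by omega
  have hq1n : q + 1 < n + 1 := by omega
  have hX' : (π (⟨p, hpn⟩ : Fin (n+1))).val = X := hX
  have hY' : (π (⟨p+1, hp1n⟩ : Fin (n+1))).val = Y := hYv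
  have hZ' : (π (⟨q, hqn⟩ : Fin (n+1))).val = Z := hZv
  have h1' : (π (⟨q+1, hq1n⟩ : Fin (n+1))).val = (X + 1) % (n + 1) := h1
  have hYne : Y ≠ (X + 1) % (n + 1) := by
    intro h
    have e : (π (⟨p+1, hp1n⟩ : Fin (n+1))).val = (π (⟨q+1, hq1n⟩ : Fin (n+1))).val := by
      rw [hY', h1', h]
    have h3 := π.injective (Fin.ext e)
    have h4 : p + 1 = q + 1 := congrArg Fin.val h3
    omega
  refine bond_gain n π (σ * π) ⟨p, by omega⟩ ⟨q, by omega⟩ ?_ ?_ ?_ ?_ ?_ ?_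
  · intro h
    have h4 : p = q := congrArg Fin.val h
    omega
  · -- preservation
    intro t ht
    refine hσ (π t.castSucc) (π t.succ) ht ?_ ?_ ?_
    · -- (π t.castSucc).val ≠ X
      intro h
      have hh : (π t.castSucc).val = (π (⟨p, hpn⟩ : Fin (n+1))).val := by rw [h, hX']
      have h3 := π.injective (Fin.ext hh)
      have h4 : t.val = p := congrArg Fin.val h3
      have h5 : t.succ = (⟨p+1, hp1n⟩ : Fin (n+1)) := Fin.ext (show t.val + 1 = p + 1 by omega)
      apply hYne
      calc Y = (π t.succ).val := by rw [h5, hY']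
        _ = ((π t.castSucc).val + 1) % (n+1) := ht
        _ = (X + 1) % (n+1) := by rw [h]
    · -- (π t.castSucc).val ≠ Z
      intro h
      have hh : (π t.castSucc).val = (π (⟨q, hqn⟩ : Fin (n+1))).val := by rw [h, hZ']
      have h3 := π.injective (Fin.ext hh)
      have h4 : t.val = q := congrArg Fin.val h3
      have h5 : t.succ = (⟨q+1, hq1n⟩ : Fin (n+1)) := Fin.ext (show t.val + 1 = q + 1 by omega)
      have e : (X + 1) % (n + 1) = (Z + 1) % (n + 1) := by
        calc (X + 1) % (n + 1)
            = (π (⟨q+1, hq1n⟩ : Fin (n+1))).val := h1'.symm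
          _ = (π t.succ).val := by rw [h5]
          _ = ((π t.castSucc).val + 1) % (n+1) := ht
          _ = (Z + 1) % (n+1) := by rw [h]
      exact hXZ (succ_mod_inj n X Z (by omega) (by omega) e)
    · -- not the Y-1 value
      intro h3
      have hvY : (π t.succ).val = Y := by
        rw [ht]
        rcases h3 with h3 | ⟨h0, hn⟩
        · rw [h3]
          exact Nat.mod_eq_of_lt (by omega)
        · rw [hn, Nat.mod_self, h0]
      have hh : (π t.succ).val = (π (⟨p+1, hp1n⟩ : Fin (n+1))).val := by rw [hvY, hY']
      have h4 := π.injective (Fin.ext hh)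
      have h5 : t.val + 1 = p + 1 := congrArg Fin.val h4
      have h6 : t.castSucc = (⟨p, hpn⟩ : Fin (n+1)) := Fin.ext (show t.val = p by omega)
      apply hYne
      calc Y = (π t.succ).val := hvY.symm
        _ = ((π t.castSucc).val + 1) % (n+1) := ht
        _ = (X + 1) % (n+1) := by rw [h6, hX']
  · exact hpσ (π (⟨p, hpn⟩ : Fin (n+1))) (π (⟨p+1, hp1n⟩ : Fin (n+1))) hX' hY'
  · exact hqσ (π (⟨q, hqn⟩ : Fin (n+1))) (π (⟨q+1, hq1n⟩ : Fin (n+1))) hZ' h1'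
  · intro h
    have hh : Y = (X + 1) % (n + 1) := by
      rw [← hY', ← hX']; exact h
    exact hYne hh
  · intro h
    have hh : (X + 1) % (n + 1) = (Z + 1) % (n + 1) := by
      rw [← h1', ← hZ']; exact h
    exact hXZ (succ_mod_inj n X Z (by omega) (by omega) hh)

set_option maxHeartbeats 3200000 in
/-- 2-move to the left, case (i): if `π̄` has the pattern
`[⋯ x y ⋯ z x̄ ⋯]` with `x, y, z` positively oriented, then some block
transposition `σ̄` of `{0,…,n}` gives `σ̄∘π̄` at least two more bonds than `π̄`. -/
theorem two_move_left_i (n p q : ℕ) (hpq : p + 1 < q) (hq : q < n)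
    (π : Equiv.Perm (Fin (n + 1)))
    (h1 : (π ⟨q + 1, by omega⟩).val = ((π ⟨p, by omega⟩).val + 1) % (n + 1))
    (h2 : ((π ⟨p, by omega⟩).val < (π ⟨p + 1, by omega⟩).val ∧
            (π ⟨p + 1, by omega⟩).val < (π ⟨q, by omega⟩).val) ∨
          ((π ⟨p + 1, by omega⟩).val < (π ⟨q, by omega⟩).val ∧
            (π ⟨q, by omega⟩).val < (π ⟨p, by omega⟩).val) ∨
          ((π ⟨q, by omega⟩).val < (π ⟨p, by omega⟩).val ∧
            (π ⟨p, by omega⟩).val < (π ⟨p + 1, by omega⟩).val)) :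
    ∃ σ : Equiv.Perm (Fin (n + 1)),
      IsBlockTransposition0 n σ ∧ bondCount0 n π + 2 ≤ bondCount0 n (σ * π) := by
  have hpn : p < n + 1 := by omega
  have hp1n : p + 1 < n + 1 := by omega
  have hqn : q < n + 1 := by omega
  have hq1n : q + 1 < n + 1 := by omega
  obtain ⟨X, hX⟩ : ∃ X, (π (⟨p, hpn⟩ : Fin (n+1))).val = X := ⟨_, rfl⟩
  obtain ⟨Y, hYv⟩ : ∃ Y, (π (⟨p+1, hp1n⟩ : Fin (n+1))).val = Y := ⟨_, rfl⟩
  obtain ⟨Z, hZv⟩ : ∃ Z, (π (⟨q, hqn⟩ : Fin (n+1))).val = Z := ⟨_, rfl⟩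
  have hXn : X ≤ n := by rw [← hX]; exact Fin.is_le _
  have hYn : Y ≤ n := by rw [← hYv]; exact Fin.is_le _
  have hZn : Z ≤ n := by rw [← hZv]; exact Fin.is_le _
  have h1' : (π (⟨q+1, hq1n⟩ : Fin (n+1))).val = (X + 1) % (n + 1) := by
    rw [← hX]; exact h1
  have h2' : (X < Y ∧ Y < Z) ∨ (Y < Z ∧ Z < X) ∨ (Z < X ∧ X < Y) := by
    rw [← hX, ← hYv, ← hZv]; exact h2
  have hYne : Y ≠ (X + 1) % (n + 1) := by
    intro h
    have e : (π (⟨p+1, hp1n⟩ : Fin (n+1))).val = (π (⟨q+1, hq1n⟩ : Fin (n+1))).val := by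
      rw [hYv, h1', h]
    have h3 := π.injective (Fin.ext e)
    have h4 : p + 1 = q + 1 := congrArg Fin.val h3
    omega
  have hd : X = n → Y ≠ 0 := by
    intro hxn h0
    apply hYne
    rw [h0, hxn, Nat.mod_self]
  rcases h2' with ⟨hxy, hyz⟩ | ⟨hyz, hzx⟩ | ⟨hzx, hxy⟩
  · -- Case 1 : X < Y < Z. cuts a = X+1, b = Z+X+2-Y, c = Z+1
    have hxy1 : X + 1 < Y := by
      have hm : (X + 1) % (n + 1) = X + 1 := Nat.mod_eq_of_lt (by omega)
      rw [hm] at hYne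
      omega
    refine ⟨btPerm n (X+1) (Z+X+2-Y) (Z+1) (by omega) (by omega) (by omega),
      btPerm_isBT n _ _ _ _ _ _, ?_⟩
    refine finish_aux n p q hpq hq π _ X Y Z hX hYv hZv h1' (by omega) ?_ ?_ ?_
    · intro u v huv hu1 hu2 hu3
      rw [btPerm_val, btPerm_val]
      rw [succ_mod n u.val (Fin.is_le u)] at huv
      have hst : v.val = u.val + 1 ∨ (u.val = n ∧ v.val = 0) := by
        split_ifs at huv <;> omega
      have hb1 := btf_lt n (X+1) (Z+X+2-Y) (Z+1) (by omega) (by omega) (by omega) u.val u.isLt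
      have hb2 := btf_lt n (X+1) (Z+X+2-Y) (Z+1) (by omega) (by omega) (by omega) v.val v.isLt
      exact mod_form n _ _ (by omega) (by omega)
        (btf_succ n _ _ _ (by omega) (by omega) (by omega) u.val v.val (Fin.is_le u) hst
          (by omega) (by omega) (by omega))
    · intro u v hu hv
      rw [btPerm_val, btPerm_val, hu, hv]
      have hb1 := btf_lt n (X+1) (Z+X+2-Y) (Z+1) (by omega) (by omega) (by omega) X (by omega)
      have hb2 := btf_lt n (X+1) (Z+X+2-Y) (Z+1) (by omega) (by omega) (by omega) Y (by omega)
      refine mod_form n _ _ (by omega) (by omega) ?_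
      unfold btf; split_ifs <;> omega
    · intro u v hu hv
      have hv' : v.val = X + 1 := by rw [hv]; exact Nat.mod_eq_of_lt (by omega)
      rw [btPerm_val, btPerm_val, hu, hv']
      have hb1 := btf_lt n (X+1) (Z+X+2-Y) (Z+1) (by omega) (by omega) (by omega) Z (by omega)
      have hb2 := btf_lt n (X+1) (Z+X+2-Y) (Z+1) (by omega) (by omega) (by omega) (X+1) (by omega)
      refine mod_form n _ _ (by omega) (by omega) ?_
      unfold btf; split_ifs <;> omega
  · -- Case 2 : Y < Z < X. cuts a = Y, b = X+Y-Z, c = X+1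
    refine ⟨btPerm n Y (X+Y-Z) (X+1) (by omega) (by omega) (by omega),
      btPerm_isBT n _ _ _ _ _ _, ?_⟩
    refine finish_aux n p q hpq hq π _ X Y Z hX hYv hZv h1' (by omega) ?_ ?_ ?_
    · intro u v huv hu1 hu2 hu3
      rw [btPerm_val, btPerm_val]
      rw [succ_mod n u.val (Fin.is_le u)] at huv
      have hst : v.val = u.val + 1 ∨ (u.val = n ∧ v.val = 0) := by
        split_ifs at huv <;> omega
      have hb1 := btf_lt n Y (X+Y-Z) (X+1) (by omega) (by omega) (by omega) u.val u.isLt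
      have hb2 := btf_lt n Y (X+Y-Z) (X+1) (by omega) (by omega) (by omega) v.val v.isLt
      exact mod_form n _ _ (by omega) (by omega)
        (btf_succ n _ _ _ (by omega) (by omega) (by omega) u.val v.val (Fin.is_le u) hst
          (by omega) (by omega) (by omega))
    · intro u v hu hv
      rw [btPerm_val, btPerm_val, hu, hv]
      have hb1 := btf_lt n Y (X+Y-Z) (X+1) (by omega) (by omega) (by omega) X (by omega)
      have hb2 := btf_lt n Y (X+Y-Z) (X+1) (by omega) (by omega) (by omega) Y (by omega)
      refine mod_form n _ _ (by omega) (by omega) ?_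
      unfold btf; split_ifs <;> omega
    · intro u v hu hv
      rw [succ_mod n X hXn] at hv
      rw [btPerm_val, btPerm_val, hu]
      have hb1 := btf_lt n Y (X+Y-Z) (X+1) (by omega) (by omega) (by omega) Z (by omega)
      have hb2 := btf_lt n Y (X+Y-Z) (X+1) (by omega) (by omega) (by omega) v.val v.isLt
      split_ifs at hv with hxn
      · rw [hv]
        have hb3 := btf_lt n Y (X+Y-Z) (X+1) (by omega) (by omega) (by omega) 0 (by omega)
        refine mod_form n _ _ (by omega) (by omega) ?_
        have h0 : Y ≠ 0 := hd hxn
        unfold btf; split_ifs <;> omega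
      · rw [hv]
        have hb3 := btf_lt n Y (X+Y-Z) (X+1) (by omega) (by omega) (by omega) (X+1) (by omega)
        refine mod_form n _ _ (by omega) (by omega) ?_
        unfold btf; split_ifs <;> omega
  · -- Case 3 : Z < X < Y. cuts a = Z+1, b = Y+Z-X, c = Y
    have hxy1 : X + 1 < Y := by
      have hm : (X + 1) % (n + 1) = X + 1 := Nat.mod_eq_of_lt (by omega)
      rw [hm] at hYne
      omega
    refine ⟨btPerm n (Z+1) (Y+Z-X) Y (by omega) (by omega) (by omega),
      btPerm_isBT n _ _ _ _ _ _, ?_⟩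
    refine finish_aux n p q hpq hq π _ X Y Z hX hYv hZv h1' (by omega) ?_ ?_ ?_
    · intro u v huv hu1 hu2 hu3
      rw [btPerm_val, btPerm_val]
      rw [succ_mod n u.val (Fin.is_le u)] at huv
      have hst : v.val = u.val + 1 ∨ (u.val = n ∧ v.val = 0) := by
        split_ifs at huv <;> omega
      have hb1 := btf_lt n (Z+1) (Y+Z-X) Y (by omega) (by omega) (by omega) u.val u.isLt
      have hb2 := btf_lt n (Z+1) (Y+Z-X) Y (by omega) (by omega) (by omega) v.val v.isLt
      exact mod_form n _ _ (by omega) (by omega)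
        (btf_succ n _ _ _ (by omega) (by omega) (by omega) u.val v.val (Fin.is_le u) hst
          (by omega) (by omega) (by omega))
    · intro u v hu hv
      rw [btPerm_val, btPerm_val, hu, hv]
      have hb1 := btf_lt n (Z+1) (Y+Z-X) Y (by omega) (by omega) (by omega) X (by omega)
      have hb2 := btf_lt n (Z+1) (Y+Z-X) Y (by omega) (by omega) (by omega) Y (by omega)
      refine mod_form n _ _ (by omega) (by omega) ?_
      unfold btf; split_ifs <;> omega
    · intro u v hu hv
      have hv' : v.val = X + 1 := by rw [hv]; exact Nat.mod_eq_of_lt (by omega)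
      rw [btPerm_val, btPerm_val, hu, hv']
      have hb1 := btf_lt n (Z+1) (Y+Z-X) Y (by omega) (by omega) (by omega) Z (by omega)
      have hb2 := btf_lt n (Z+1) (Y+Z-X) Y (by omega) (by omega) (by omega) (X+1) (by omega)
      refine mod_form n _ _ (by omega) (by omega) ?_
      unfold btf; split_ifs <;> omega
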